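/- Let F be a bounded operator with closed range, F = U|F| its polar decomposition, and X a partial isometry such that F − X is compact. Then the difference of projections P − Q is compact, where P = U*U is the projection onto ker(F)^⊥ and Q = X*X. In particular (P, Q) is a Fredholm pair of projections. -/

import Mathlib

noncomputable section

/-- The sequence space ℓ² over ℂ. -/
abbrev L2C : Type := lp (fun _ : ℕ => ℂ) 2

/-- The standard orthonormal basis vectors of ℓ². -/
def stdVec (i : ℕ) : L2C := lp.single 2 i 1

/-- A bounded operator between Hilbert spaces is a partial isometry if it is
isometric on the orthogonal complement of its kernel. -/
def IsPartialIsometry {E F : Type*} [NormedAddCommGroup E] [InnerProductSpace ℂ E]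
    [NormedAddCommGroup F] [InnerProductSpace ℂ F] (X : E →L[ℂ] F) : Prop :=
  ∀ v ∈ (LinearMap.ker (X : E →ₗ[ℂ] F))ᗮ, ‖X v‖ = ‖v‖

/-- A bounded operator from ℓ² is Hilbert–Schmidt if the squared norms of the images
of the standard basis vectors are summable. -/
def IsHS {H : Type*} [NormedAddCommGroup H] [InnerProductSpace ℂ H]
    (T : L2C →L[ℂ] H) : Prop := Summable fun i => ‖T (stdVec i)‖ ^ 2

/-- Squared Hilbert–Schmidt norm of a bounded operator from ℓ². -/
def hsNormSq {H : Type*} [NormedAddCommGroup H] [InnerProductSpace ℂ H]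
    (T : L2C →L[ℂ] H) : ℝ := ∑' i, ‖T (stdVec i)‖ ^ 2

/-- `U` is the partial isometry in the polar decomposition `F = U|F|` of `F`:
`U` is a partial isometry with the same kernel as `F`, `U* F = |F|` is positive
and `F = U (U* F)`. -/
def IsPolarDecomp {H : Type*} [NormedAddCommGroup H] [InnerProductSpace ℂ H]
    [CompleteSpace H] (F U : L2C →L[ℂ] H) : Prop :=
  IsPartialIsometry U ∧ LinearMap.ker (U : L2C →ₗ[ℂ] H) = LinearMap.ker (F : L2C →ₗ[ℂ] H) ∧
  (ContinuousLinearMap.adjoint U ∘L F).IsPositive ∧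
  F = U ∘L (ContinuousLinearMap.adjoint U ∘L F)

/-- A pair of projections `(P, Q)` is a Fredholm pair if `ker Q ∩ ran P` and
`ran Q ∩ ker P` are both finite dimensional. -/
def FredholmPair {E : Type*} [NormedAddCommGroup E] [InnerProductSpace ℂ E]
    (P Q : E →L[ℂ] E) : Prop :=
  FiniteDimensional ℂ ↥(LinearMap.ker (Q : E →ₗ[ℂ] E) ⊓ LinearMap.range (P : E →ₗ[ℂ] E)) ∧
  FiniteDimensional ℂ ↥(LinearMap.range (Q : E →ₗ[ℂ] E) ⊓ LinearMap.ker (P : E →ₗ[ℂ] E))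

/-- The index of a Fredholm pair of projections:
`j(P,Q) = dim(ker Q ∩ ran P) - dim(ran Q ∩ ker P)`. -/
def pairIndex {E : Type*} [NormedAddCommGroup E] [InnerProductSpace ℂ E]
    (P Q : E →L[ℂ] E) : ℤ :=
  (Module.finrank ℂ ↥(LinearMap.ker (Q : E →ₗ[ℂ] E) ⊓ LinearMap.range (P : E →ₗ[ℂ] E)) : ℤ) -
  (Module.finrank ℂ ↥(LinearMap.range (Q : E →ₗ[ℂ] E) ⊓ LinearMap.ker (P : E →ₗ[ℂ] E)) : ℤ)

/-! ### Auxiliary lemmas -/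

section Aux

open ContinuousLinearMap Set

variable {E G : Type*} [NormedAddCommGroup E] [InnerProductSpace ℂ E]
  [NormedAddCommGroup G] [InnerProductSpace ℂ G] [CompleteSpace E] [CompleteSpace G]

local notation "⟪" x ", " y "⟫" => @inner ℂ _ _ x y

lemma aux_sq_norm (S : E →L[ℂ] G) (z : E) :
    ‖S z‖ ^ 2 ≤ ‖(ContinuousLinearMap.adjoint S ∘L S) z‖ * ‖z‖ := by
  have h1 : (‖S z‖ : ℝ) ^ 2 = RCLike.re ⟪(ContinuousLinearMap.adjoint S ∘L S) z, z⟫ := by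
    rw [ContinuousLinearMap.comp_apply, ContinuousLinearMap.adjoint_inner_left]
    rw [← inner_self_eq_norm_sq (𝕜 := ℂ)]
  rw [h1]
  calc RCLike.re ⟪(ContinuousLinearMap.adjoint S ∘L S) z, z⟫
      ≤ ‖⟪(ContinuousLinearMap.adjoint S ∘L S) z, z⟫‖ := RCLike.re_le_norm _
    _ ≤ ‖(ContinuousLinearMap.adjoint S ∘L S) z‖ * ‖z‖ := norm_inner_le_norm _ _

lemma compact_of_adjoint_comp (S : E →L[ℂ] G)
    (h : IsCompactOperator ⇑(ContinuousLinearMap.adjoint S ∘L S)) :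
    IsCompactOperator ⇑S := by
  set T := ContinuousLinearMap.adjoint S ∘L S with hTdef
  rw [isCompactOperator_iff_exists_mem_nhds_isCompact_closure_image]
  refine ⟨Metric.closedBall 0 1, Metric.closedBall_mem_nhds 0 one_pos, ?_⟩
  refine TotallyBounded.isCompact_of_isClosed (TotallyBounded.closure ?_) isClosed_closure
  have hTB : TotallyBounded (⇑T '' Metric.closedBall 0 1) := by
    have h' : IsCompactOperator ⇑(T : E →ₗ[ℂ] E) := h
    obtain ⟨K, hK, hKsub⟩ := h'.image_closedBall_subset_compact 1
    exact hK.totallyBounded.subset hKsub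
  rw [Metric.totallyBounded_iff]
  intro ε hε
  have hδ : (0:ℝ) < ε ^ 2 / 4 := by positivity
  obtain ⟨t, hts, htfin, hcov⟩ :=
    totallyBounded_iff_subset.mp hTB _ (Metric.dist_mem_uniformity hδ)
  have hpre : ∀ y ∈ t, ∃ x, x ∈ Metric.closedBall (0:E) 1 ∧ T x = y := by
    intro y hy
    obtain ⟨x, hx, rfl⟩ := hts hy
    exact ⟨x, hx, rfl⟩
  classical
  choose! g hgB hgT using hpre
  refine ⟨(fun y => S (g y)) '' t, htfin.image _, ?_⟩
  rintro _ ⟨z, hz, rfl⟩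
  have hmem : T z ∈ ⋃ y ∈ t, {x | dist x y < ε ^ 2 / 4} := hcov (mem_image_of_mem _ hz)
  obtain ⟨y, hy, hdist⟩ := mem_iUnion₂.1 hmem
  refine mem_iUnion₂.2 ⟨S (g y), mem_image_of_mem _ hy, ?_⟩
  simp only [Metric.mem_ball]
  have h1 : ‖S (z - g y)‖ ^ 2 ≤ ‖T (z - g y)‖ * ‖z - g y‖ := aux_sq_norm S _
  have h2 : ‖T z - T (g y)‖ < ε ^ 2 / 4 := by
    have : dist (T z) y < ε ^ 2 / 4 := hdist
    rwa [← hgT y hy, dist_eq_norm] at this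
  have h3 : ‖z - g y‖ ≤ 2 := by
    have hz1 : ‖z‖ ≤ 1 := by simpa [Metric.mem_closedBall, dist_zero_right] using hz
    have hg1 : ‖g y‖ ≤ 1 := by
      have := hgB y hy
      simpa [Metric.mem_closedBall, dist_zero_right] using this
    calc ‖z - g y‖ ≤ ‖z‖ + ‖g y‖ := norm_sub_le _ _
      _ ≤ 2 := by linarith
  have h4 : ‖S z - S (g y)‖ ^ 2 < ε ^ 2 := by
    have e1 : ‖S z - S (g y)‖ = ‖S (z - g y)‖ := by rw [map_sub]
    have e2 : ‖T (z - g y)‖ = ‖T z - T (g y)‖ := by rw [map_sub]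
    rw [e1]
    calc ‖S (z - g y)‖ ^ 2 ≤ ‖T (z - g y)‖ * ‖z - g y‖ := h1
      _ ≤ (ε ^ 2 / 4) * 2 := by
          apply mul_le_mul (le_of_lt (e2 ▸ h2)) h3 (norm_nonneg _) (le_of_lt hδ)
      _ < ε ^ 2 := by nlinarith
  rw [dist_eq_norm]
  exact lt_of_pow_lt_pow_left₀ 2 (le_of_lt hε) h4

lemma isCompactOperator_adjoint (S : E →L[ℂ] G) (h : IsCompactOperator ⇑S) :
    IsCompactOperator ⇑(ContinuousLinearMap.adjoint S) := by
  apply compact_of_adjoint_comp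
  rw [ContinuousLinearMap.adjoint_adjoint]
  have : ⇑(S ∘L ContinuousLinearMap.adjoint S) = ⇑S ∘ ⇑(ContinuousLinearMap.adjoint S) := rfl
  rw [this]
  exact h.comp_clm _

lemma partial_isometry_proj (X : E →L[ℂ] G) (hX : IsPartialIsometry X) (v : E) :
    (ContinuousLinearMap.adjoint X ∘L X) v
      = (Submodule.orthogonalProjection (LinearMap.ker (X : E →ₗ[ℂ] G))ᗮ v : E) := by
  haveI : CompleteSpace ↥(LinearMap.ker (X : E →ₗ[ℂ] G)) := (ContinuousLinearMap.isClosed_ker X).completeSpace_coe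
  set K : Submodule ℂ E := (LinearMap.ker (X : E →ₗ[ℂ] G))ᗮ with hK
  have hnorm : ∀ x : ↥K, ‖(X ∘L K.subtypeL) x‖ = ‖x‖ := fun x => hX x x.2
  have hinner : ∀ x y : ↥K, ⟪X (x:E), X (y:E)⟫ = ⟪(x:E), (y:E)⟫ := by
    have h := (LinearMap.norm_map_iff_inner_map_map (𝕜 := ℂ) (X ∘L K.subtypeL)).mp hnorm
    intro x y
    simpa using h x y
  have hker_orth : Kᗮ = LinearMap.ker (X : E →ₗ[ℂ] G) := Submodule.orthogonal_orthogonal _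
  set a := Submodule.orthogonalProjection K v with ha
  have hva : v - (a : E) ∈ LinearMap.ker (X : E →ₗ[ℂ] G) := by
    rw [← hker_orth]; exact Submodule.sub_starProjection_mem_orthogonal v
  have hXv : X v = X a := by
    have h0 : X (v - (a : E)) = 0 := hva
    rw [map_sub, sub_eq_zero] at h0
    exact h0
  rw [ContinuousLinearMap.comp_apply, hXv]
  apply ext_inner_right ℂ
  intro w
  rw [ContinuousLinearMap.adjoint_inner_left]
  set b := Submodule.orthogonalProjection K w with hb
  have hwb : w - (b : E) ∈ LinearMap.ker (X : E →ₗ[ℂ] G) := by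
    rw [← hker_orth]; exact Submodule.sub_starProjection_mem_orthogonal w
  have hXw : X w = X b := by
    have h0 : X (w - (b : E)) = 0 := hwb
    rw [map_sub, sub_eq_zero] at h0
    exact h0
  have h1 : ⟪X (a:E), X w⟫ = ⟪(a:E), (b:E)⟫ := by rw [hXw]; exact hinner a b
  have h2 : ⟪(a:E), w⟫ = ⟪(a:E), (b:E)⟫ := by
    have ha' : (a : E) ∈ (LinearMap.ker (X : E →ₗ[ℂ] G))ᗮ := a.2
    have hz : ⟪(a:E), w - (b:E)⟫ = 0 :=
      Submodule.inner_left_of_mem_orthogonal hwb ha'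
    rw [inner_sub_right] at hz
    exact sub_eq_zero.mp hz
  rw [h1, h2]

lemma aux_cancel {x f t C : ℝ} (hx : 0 < x) (h1 : x ≤ C * f) (h2 : f ^ 2 ≤ t * x)
    (hf : 0 ≤ f) (ht : 0 ≤ t) : x ≤ (C ^ 2 + 1) * t := by
  nlinarith [sq_nonneg (C * f - x), sq_nonneg C, mul_nonneg hf ht]

lemma exists_G (F : E →L[ℂ] G) (hran : IsClosed (Set.range ⇑F)) :
    ∃ Gop : E →L[ℂ] E, ∀ v : E,
      Gop ((ContinuousLinearMap.adjoint F ∘L F) v)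
        = (Submodule.orthogonalProjection (LinearMap.ker (F : E →ₗ[ℂ] G))ᗮ v : E) := by
  haveI : CompleteSpace ↥(LinearMap.ker (F : E →ₗ[ℂ] G)) := (ContinuousLinearMap.isClosed_ker F).completeSpace_coe
  set V : Submodule ℂ E := (LinearMap.ker (F : E →ₗ[ℂ] G))ᗮ with hV
  haveI : CompleteSpace ↥V := (Submodule.isClosed_orthogonal _).completeSpace_coe
  have hVorth : Vᗮ = LinearMap.ker (F : E →ₗ[ℂ] G) := Submodule.orthogonal_orthogonal _
  set T : E →L[ℂ] E := ContinuousLinearMap.adjoint F ∘L F with hT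
  have hTker : ∀ v ∈ LinearMap.ker (F : E →ₗ[ℂ] G), T v = 0 := by
    intro v hv
    have : F v = 0 := hv
    simp [hT, this]
  have hTmem : ∀ v : E, T v ∈ V := by
    intro v
    rw [hV, Submodule.mem_orthogonal]
    intro u hu
    have : F u = 0 := hu
    rw [hT, ContinuousLinearMap.comp_apply, ContinuousLinearMap.adjoint_inner_right, this,
      inner_zero_left]
  set F₁ : ↥V →L[ℂ] G := F ∘L V.subtypeL with hF₁
  have hrange₁ : Set.range ⇑F₁ = Set.range ⇑F := by
    apply Set.Subset.antisymm
    · rintro _ ⟨x, rfl⟩; exact ⟨x, rfl⟩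
    · rintro _ ⟨v, rfl⟩
      refine ⟨Submodule.orthogonalProjection V v, ?_⟩
      have hm : v - (Submodule.orthogonalProjection V v : E) ∈ LinearMap.ker (F : E →ₗ[ℂ] G) := by
        have h' := Submodule.sub_starProjection_mem_orthogonal (K := V) v
        rwa [hVorth] at h'
      have h0 : F (v - (Submodule.orthogonalProjection V v : E)) = 0 := hm
      rw [map_sub, sub_eq_zero] at h0
      simpa [hF₁] using h0.symm
  set N : Submodule ℂ G := LinearMap.range (F₁ : ↥V →ₗ[ℂ] G) with hN
  have hNclosed : IsClosed (N : Set G) := by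
    have : (N : Set G) = Set.range ⇑F₁ := by
      ext x; simp [hN, LinearMap.mem_range, Set.mem_range]
    rw [this, hrange₁]; exact hran
  haveI : CompleteSpace ↥N := hNclosed.completeSpace_coe
  set F₂ : ↥V →L[ℂ] ↥N := F₁.codRestrict N (fun x => LinearMap.mem_range_self _ x) with hF₂
  have hker₂ : LinearMap.ker (F₂ : ↥V →ₗ[ℂ] ↥N) = ⊥ := by
    rw [Submodule.eq_bot_iff]
    rintro x hx
    have h0 : F₁ x = 0 := by
      have := hx
      rw [LinearMap.mem_ker, ContinuousLinearMap.coe_coe] at this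
      have : (F₂ x : G) = 0 := by rw [this]; rfl
      simpa [hF₂] using this
    have hxker : (x : E) ∈ LinearMap.ker (F : E →ₗ[ℂ] G) := h0
    have hinner : ⟪(x:E), (x:E)⟫ = 0 :=
      Submodule.inner_left_of_mem_orthogonal hxker x.2
    have : (x : E) = 0 := inner_self_eq_zero.mp hinner
    exact Subtype.ext this
  have hrange₂ : LinearMap.range (F₂ : ↥V →ₗ[ℂ] ↥N) = ⊤ := by
    rw [Submodule.eq_top_iff']
    rintro ⟨y, hy⟩
    obtain ⟨x, hx⟩ := hy
    exact ⟨x, Subtype.ext hx⟩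
  set e : ↥V ≃L[ℂ] ↥N := ContinuousLinearEquiv.ofBijective F₂ hker₂ hrange₂ with he
  set C : ℝ := ‖(e.symm : ↥N →L[ℂ] ↥V)‖ with hC
  have hbound : ∀ x : ↥V, ‖x‖ ≤ C * ‖F (x : E)‖ := by
    intro x
    have h1 : x = e.symm (e x) := (e.symm_apply_apply x).symm
    have h2 : ‖e.symm (e x)‖ ≤ C * ‖e x‖ := (e.symm : ↥N →L[ℂ] ↥V).le_opNorm (e x)
    have h3 : ‖e x‖ = ‖F (x : E)‖ := by
      have : e x = F₂ x := by rw [he]; rfl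
      rw [this]
      rfl
    calc ‖x‖ = ‖e.symm (e x)‖ := by rw [← h1]
      _ ≤ C * ‖e x‖ := h2
      _ = C * ‖F (x : E)‖ := by rw [h3]
  have hTbound : ∀ x : ↥V, ‖x‖ ≤ (C ^ 2 + 1) * ‖T (x : E)‖ := by
    intro x
    rcases eq_or_ne x 0 with rfl | hx
    · simp
    have hxpos : (0:ℝ) < ‖x‖ := norm_pos_iff.mpr hx
    have hFx : ‖F (x:E)‖ ^ 2 ≤ ‖T (x:E)‖ * ‖x‖ := by
      have h1 : (‖F (x:E)‖ : ℝ) ^ 2 = RCLike.re ⟪T (x:E), (x:E)⟫ := by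
        rw [hT, ContinuousLinearMap.comp_apply, ContinuousLinearMap.adjoint_inner_left]
        rw [← inner_self_eq_norm_sq (𝕜 := ℂ)]
      rw [h1]
      calc RCLike.re ⟪T (x:E), (x:E)⟫ ≤ ‖⟪T (x:E), (x:E)⟫‖ := RCLike.re_le_norm _
        _ ≤ ‖T (x:E)‖ * ‖(x:E)‖ := norm_inner_le_norm _ _
        _ = ‖T (x:E)‖ * ‖x‖ := rfl
    exact aux_cancel hxpos (hbound x) hFx (norm_nonneg _) (norm_nonneg _)
  set T₀ : ↥V →L[ℂ] ↥V := (T ∘L V.subtypeL).codRestrict V (fun x => hTmem x) with hT₀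
  have hT₀coe : ∀ x : ↥V, (T₀ x : E) = T (x : E) := fun x => rfl
  have hT₀bound : ∀ x : ↥V, ‖x‖ ≤ (C ^ 2 + 1) * ‖T₀ x‖ := by
    intro x
    have : ‖T₀ x‖ = ‖T (x:E)‖ := rfl
    rw [this]; exact hTbound x
  have hkerT₀ : LinearMap.ker (T₀ : ↥V →ₗ[ℂ] ↥V) = ⊥ := by
    rw [Submodule.eq_bot_iff]
    intro x hx
    rw [LinearMap.mem_ker, ContinuousLinearMap.coe_coe] at hx
    have := hT₀bound x
    rw [hx, norm_zero, mul_zero] at this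
    exact norm_le_zero_iff.mp this
  have hanti : AntilipschitzWith (⟨C ^ 2 + 1, by positivity⟩ : NNReal) ⇑T₀ :=
    ContinuousLinearMap.antilipschitz_of_bound T₀ hT₀bound
  have hclosedrangeT₀ : IsClosed (Set.range ⇑T₀) :=
    hanti.isClosed_range T₀.uniformContinuous
  set R : Submodule ℂ ↥V := LinearMap.range (T₀ : ↥V →ₗ[ℂ] ↥V) with hR
  haveI : CompleteSpace ↥R := by
    have : (R : Set ↥V) = Set.range ⇑T₀ := by ext x; simp [hR]
    exact (this ▸ hclosedrangeT₀ : IsClosed (R : Set ↥V)).completeSpace_coe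
  have hRorth : Rᗮ = ⊥ := by
    rw [Submodule.eq_bot_iff]
    intro u hu
    have h0 : ⟪(T₀ u : ↥V), u⟫ = 0 := by
      rw [Submodule.mem_orthogonal] at hu
      exact hu (T₀ u) (LinearMap.mem_range_self _ u)
    have h1 : ⟪T ((u:E)), ((u:E))⟫ = 0 := by
      have h1' : ⟪((T₀ u : ↥V) : E), ((u:E))⟫ = 0 := by
        rw [← Submodule.coe_inner]; exact h0
      rwa [hT₀coe] at h1'
    have h2 : ⟪F (u:E), F (u:E)⟫ = 0 := by
      rw [hT, ContinuousLinearMap.comp_apply, ContinuousLinearMap.adjoint_inner_left] at h1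
      exact h1
    have h3 : F (u:E) = 0 := inner_self_eq_zero.mp h2
    have h4 : (u:E) ∈ LinearMap.ker (F : E →ₗ[ℂ] G) := h3
    have h5 : ⟪(u:E), (u:E)⟫ = 0 := Submodule.inner_left_of_mem_orthogonal h4 u.2
    exact Subtype.ext (inner_self_eq_zero.mp h5)
  have hrangeT₀ : LinearMap.range (T₀ : ↥V →ₗ[ℂ] ↥V) = ⊤ := Submodule.orthogonal_eq_bot_iff.mp hRorth
  set e2 : ↥V ≃L[ℂ] ↥V := ContinuousLinearEquiv.ofBijective T₀ hkerT₀ hrangeT₀ with he2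
  refine ⟨V.subtypeL ∘L (e2.symm : ↥V →L[ℂ] ↥V) ∘L Submodule.orthogonalProjection V, ?_⟩
  intro v
  set p : ↥V := Submodule.orthogonalProjection V v with hp
  have hTv : T v = T (p : E) := by
    have hm : v - (p : E) ∈ LinearMap.ker (F : E →ₗ[ℂ] G) := by
      have h' := Submodule.sub_starProjection_mem_orthogonal (K := V) v
      rwa [hVorth] at h'
    have h0 : T (v - (p : E)) = 0 := hTker _ hm
    rw [map_sub, sub_eq_zero] at h0
    exact h0
  have hproj : Submodule.orthogonalProjection V (T v) = T₀ p := by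
    apply Subtype.ext
    have h1 : (Submodule.orthogonalProjection V (T v) : E) = T v :=
      Submodule.starProjection_eq_self_iff.mpr (hTmem v)
    rw [h1, hT₀coe, hTv]
  have hsymm : e2.symm (T₀ p) = p := e2.symm_apply_apply p
  simp only [ContinuousLinearMap.comp_apply]
  rw [hproj]
  have : (e2.symm : ↥V →L[ℂ] ↥V) (T₀ p) = e2.symm (T₀ p) := rfl
  rw [this, hsymm]
  rfl

omit [CompleteSpace G] in
lemma finiteDimensional_of_compact_fix (M : Submodule ℂ E) (hM : IsClosed (M : Set E))
    (D : E →L[ℂ] E) (hD : IsCompactOperator ⇑D) (hfix : ∀ v ∈ M, D v = v) :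
    FiniteDimensional ℂ ↥M := by
  obtain ⟨K, hK, hnb⟩ := hD
  obtain ⟨ε, hε, hball⟩ := Metric.mem_nhds_iff.mp hnb
  set S : Set E := (M : Set E) ∩ Metric.closedBall 0 (ε / 2) with hS
  have hSK : S ⊆ K := by
    rintro x ⟨hxM, hxb⟩
    have hx : x ∈ Metric.ball (0:E) ε := by
      have : ‖x‖ ≤ ε / 2 := by simpa [dist_zero_right] using hxb
      simp only [Metric.mem_ball, dist_zero_right]
      linarith
    have := hball hx
    simpa [hfix x hxM] using this
  have hScl : IsClosed S := hM.inter Metric.isClosed_closedBall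
  have hScompact : IsCompact S := hK.of_isClosed_subset hScl hSK
  have hcb : IsCompact (Metric.closedBall (0 : ↥M) (ε / 2)) := by
    rw [Subtype.isCompact_iff]
    have himg : Subtype.val '' Metric.closedBall (0 : ↥M) (ε / 2) = S := by
      ext x
      constructor
      · rintro ⟨y, hy, rfl⟩
        exact ⟨y.2, by simpa [dist_zero_right] using hy⟩
      · rintro ⟨hxM, hxb⟩
        exact ⟨⟨x, hxM⟩, by simpa [Metric.mem_closedBall, dist_zero_right] using hxb, rfl⟩
    rw [himg]
    exact hScompact
  exact FiniteDimensional.of_isCompact_closedBall₀ ℂ (by positivity) hcb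

end Aux

/-! ### Main theorem -/

open ContinuousLinearMap

set_option maxHeartbeats 2000000 in
/-- If `F` has closed range, `F = U|F|` is its polar decomposition, and `X` is a partial
isometry with `F - X` compact, then `P - Q` is compact, where `P = U*U` is the
projection onto `ker(F)ᗮ` and `Q = X*X`; in particular `(P, Q)` is a Fredholm pair. -/
theorem stmt_9 {H : Type*} [NormedAddCommGroup H] [InnerProductSpace ℂ H]
    [CompleteSpace H] (F U X : L2C →L[ℂ] H)
    (hran : IsClosed (Set.range F)) (hpolar : IsPolarDecomp F U)
    (hX : IsPartialIsometry X) (hcpt : IsCompactOperator ⇑(F - X)) :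
    IsCompactOperator
        ⇑(ContinuousLinearMap.adjoint U ∘L U - ContinuousLinearMap.adjoint X ∘L X) ∧
      FredholmPair (ContinuousLinearMap.adjoint U ∘L U)
        (ContinuousLinearMap.adjoint X ∘L X) := by
  obtain ⟨hU, hker, -, -⟩ := hpolar
  set P : L2C →L[ℂ] L2C := ContinuousLinearMap.adjoint U ∘L U with hPdef
  set Q : L2C →L[ℂ] L2C := ContinuousLinearMap.adjoint X ∘L X with hQdef
  set T : L2C →L[ℂ] L2C := ContinuousLinearMap.adjoint F ∘L F with hTdef
  haveI : CompleteSpace ↥(LinearMap.ker (F : L2C →ₗ[ℂ] H)) :=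
    (ContinuousLinearMap.isClosed_ker F).completeSpace_coe
  haveI : CompleteSpace ↥(LinearMap.ker (U : L2C →ₗ[ℂ] H)) :=
    (ContinuousLinearMap.isClosed_ker U).completeSpace_coe
  haveI : CompleteSpace ↥(LinearMap.ker (X : L2C →ₗ[ℂ] H)) :=
    (ContinuousLinearMap.isClosed_ker X).completeSpace_coe
  -- P and Q are the orthogonal projections onto (ker F)ᗮ and (ker X)ᗮ
  have hP : ∀ v, P v = (Submodule.orthogonalProjection (LinearMap.ker (F : L2C →ₗ[ℂ] H))ᗮ v : L2C) := by
    intro v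
    rw [hPdef, partial_isometry_proj U hU v]
    exact (Submodule.eq_starProjection_of_mem_orthogonal (K := (LinearMap.ker (F : L2C →ₗ[ℂ] H))ᗮ) (u := v)
      (by rw [← hker]; exact Submodule.starProjection_apply_mem _ v)
      (by rw [← hker]; exact Submodule.sub_starProjection_mem_orthogonal (K := (LinearMap.ker (U : L2C →ₗ[ℂ] H))ᗮ) v)).symm
  have hQ : ∀ v, Q v = (Submodule.orthogonalProjection (LinearMap.ker (X : L2C →ₗ[ℂ] H))ᗮ v : L2C) :=
    partial_isometry_proj X hX
  have hPmem : ∀ v ∈ (LinearMap.ker (F : L2C →ₗ[ℂ] H))ᗮ, P v = v := by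
    intro v hv
    rw [hP v]; exact Submodule.starProjection_eq_self_iff.mpr hv
  have hQmem : ∀ v ∈ (LinearMap.ker (X : L2C →ₗ[ℂ] H))ᗮ, Q v = v := by
    intro v hv
    rw [hQ v]; exact Submodule.starProjection_eq_self_iff.mpr hv
  have hPidem : ∀ v, P (P v) = P v := by
    intro v
    exact hPmem _ (by rw [hP v]; exact (Submodule.orthogonalProjection _ v).2)
  have hQidem : ∀ v, Q (Q v) = Q v := by
    intro v
    exact hQmem _ (by rw [hQ v]; exact (Submodule.orthogonalProjection _ v).2)
  -- T maps into (ker F)ᗮ, hence P ∘ T = T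
  have hTmem : ∀ v, T v ∈ (LinearMap.ker (F : L2C →ₗ[ℂ] H))ᗮ := by
    intro v
    rw [Submodule.mem_orthogonal]
    intro u hu
    have : F u = 0 := hu
    rw [hTdef, ContinuousLinearMap.comp_apply, ContinuousLinearMap.adjoint_inner_right, this,
      inner_zero_left]
  have hPT : ∀ v, P (T v) = T v := fun v => hPmem _ (hTmem v)
  -- the operator G
  obtain ⟨Gop, hGop⟩ := exists_G F hran
  have hGT : ∀ v, Gop (T v) = P v := by
    intro v
    rw [hP v]
    exact hGop v
  -- compactness of T - Q
  have hDadj : IsCompactOperator ⇑(ContinuousLinearMap.adjoint (F - X)) :=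
    isCompactOperator_adjoint _ hcpt
  have hdecomp : T - Q
      = ContinuousLinearMap.adjoint F ∘L (F - X) + ContinuousLinearMap.adjoint (F - X) ∘L X := by
    have hadj : ContinuousLinearMap.adjoint (F - X)
        = ContinuousLinearMap.adjoint F - ContinuousLinearMap.adjoint X :=
      map_sub (ContinuousLinearMap.adjoint : (L2C →L[ℂ] H) ≃ₗᵢ⋆[ℂ] (H →L[ℂ] L2C)) F X
    rw [hadj, ContinuousLinearMap.comp_sub, ContinuousLinearMap.sub_comp, hTdef, hQdef]
    abel
  have hK1 : IsCompactOperator ⇑(T - Q) := by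
    rw [hdecomp]
    have c1 : IsCompactOperator ⇑(ContinuousLinearMap.adjoint F ∘L (F - X)) := by
      have := hcpt.clm_comp (ContinuousLinearMap.adjoint F)
      rwa [← ContinuousLinearMap.coe_comp'] at this
    have c2 : IsCompactOperator ⇑(ContinuousLinearMap.adjoint (F - X) ∘L X) := by
      have := hDadj.comp_clm X
      rwa [← ContinuousLinearMap.coe_comp'] at this
    have := c1.add c2
    rwa [← ContinuousLinearMap.coe_add'] at this
  -- the key algebraic identity
  have eGT : Gop * T = P := ContinuousLinearMap.ext hGT
  have ePT : P * T = T := ContinuousLinearMap.ext hPT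
  have eQQ : Q * Q = Q := ContinuousLinearMap.ext hQidem
  have key : P - Q = Gop * (T - Q) * (1 - Q) + (1 - P) * (T - Q) := by
    calc P - Q
        = (Gop * T) - (Gop * T) * Q + Gop * (Q * Q) - Gop * Q + (T - P * T) + ((P * Q) - Q) := by
          rw [eGT, ePT, eQQ]; abel
      _ = Gop * (T - Q) * (1 - Q) + (1 - P) * (T - Q) := by noncomm_ring
  have hPQcpt : IsCompactOperator ⇑(P - Q) := by
    rw [key]
    have c1 : IsCompactOperator ⇑(Gop * (T - Q) * (1 - Q)) := by
      have h1 := (hK1.comp_clm (1 - Q)).clm_comp Gop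
      have : ⇑(Gop * (T - Q) * (1 - Q)) = ⇑Gop ∘ ⇑(T - Q) ∘ ⇑(1 - Q) := rfl
      rw [this]
      exact h1
    have c2 : IsCompactOperator ⇑((1 - P) * (T - Q)) := by
      have h2 := hK1.clm_comp (1 - P)
      have : ⇑((1 - P) * (T - Q)) = ⇑(1 - P) ∘ ⇑(T - Q) := rfl
      rw [this]
      exact h2
    have := c1.add c2
    rwa [← ContinuousLinearMap.coe_add'] at this
  refine ⟨hPQcpt, ?_, ?_⟩
  · -- ker Q ⊓ range P is finite dimensional
    apply finiteDimensional_of_compact_fix _ ?_ (P - Q) hPQcpt ?_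
    · have hrangeP : (LinearMap.range (P : L2C →ₗ[ℂ] L2C) : Set L2C) = (LinearMap.ker ((1 - P : L2C →L[ℂ] L2C) : L2C →ₗ[ℂ] L2C) : Set L2C) := by
        ext v
        simp only [SetLike.mem_coe, LinearMap.mem_range, LinearMap.mem_ker, ContinuousLinearMap.coe_coe]
        constructor
        · rintro ⟨u, rfl⟩
          have : (1 - P) (P u) = P u - P (P u) := by
            simp [ContinuousLinearMap.sub_apply]
          rw [this, hPidem, sub_self]
        · intro hv
          have : v - P v = 0 := by
            have h' : (1 - P) v = v - P v := by simp [ContinuousLinearMap.sub_apply]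
            rw [← h']; exact hv
          exact ⟨v, (sub_eq_zero.mp this).symm⟩
      have : ((LinearMap.ker (Q : L2C →ₗ[ℂ] L2C) ⊓ LinearMap.range (P : L2C →ₗ[ℂ] L2C) : Submodule ℂ L2C) : Set L2C)
          = (LinearMap.ker (Q : L2C →ₗ[ℂ] L2C) : Set L2C) ∩ (LinearMap.ker ((1 - P : L2C →L[ℂ] L2C) : L2C →ₗ[ℂ] L2C) : Set L2C) := by
        rw [Submodule.coe_inf, hrangeP]
      rw [this]
      exact (ContinuousLinearMap.isClosed_ker Q).inter (ContinuousLinearMap.isClosed_ker (1 - P))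
    · rintro v hv
      obtain ⟨hvQ, hvP⟩ := Submodule.mem_inf.mp hv
      obtain ⟨u, rfl⟩ := hvP
      have h1 : Q (P u) = 0 := hvQ
      rw [ContinuousLinearMap.coe_coe, ContinuousLinearMap.sub_apply, h1, hPidem, sub_zero]
  · -- range Q ⊓ ker P is finite dimensional
    apply finiteDimensional_of_compact_fix _ ?_ (-(P - Q)) ?_ ?_
    · have hrangeQ : (LinearMap.range (Q : L2C →ₗ[ℂ] L2C) : Set L2C) = (LinearMap.ker ((1 - Q : L2C →L[ℂ] L2C) : L2C →ₗ[ℂ] L2C) : Set L2C) := by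
        ext v
        simp only [SetLike.mem_coe, LinearMap.mem_range, LinearMap.mem_ker, ContinuousLinearMap.coe_coe]
        constructor
        · rintro ⟨u, rfl⟩
          have : (1 - Q) (Q u) = Q u - Q (Q u) := by
            simp [ContinuousLinearMap.sub_apply]
          rw [this, hQidem, sub_self]
        · intro hv
          have h' : (1 - Q) v = v - Q v := by simp [ContinuousLinearMap.sub_apply]
          rw [h'] at hv
          rw [sub_eq_zero] at hv
          exact ⟨v, hv.symm⟩
      have : ((LinearMap.range (Q : L2C →ₗ[ℂ] L2C) ⊓ LinearMap.ker (P : L2C →ₗ[ℂ] L2C) : Submodule ℂ L2C) : Set L2C)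
          = (LinearMap.ker ((1 - Q : L2C →L[ℂ] L2C) : L2C →ₗ[ℂ] L2C) : Set L2C) ∩ (LinearMap.ker (P : L2C →ₗ[ℂ] L2C) : Set L2C) := by
        rw [Submodule.coe_inf, hrangeQ]
      rw [this]
      exact (ContinuousLinearMap.isClosed_ker (1 - Q)).inter (ContinuousLinearMap.isClosed_ker P)
    · have := hPQcpt.neg
      rwa [← ContinuousLinearMap.coe_neg'] at this
    · rintro v hv
      obtain ⟨hvQ, hvP⟩ := Submodule.mem_inf.mp hv
      obtain ⟨u, rfl⟩ := hvQ
      have h1 : P (Q u) = 0 := hvP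
      rw [ContinuousLinearMap.coe_coe, ContinuousLinearMap.neg_apply, ContinuousLinearMap.sub_apply, h1, hQidem, zero_sub,
        neg_neg]

end
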